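/- Let U ⊆ ℂ be open and connected. Let f, N : U → ℍ be smooth with Re f = 0, Re N = 0, N² = −1, satisfying f_y = N·f_x = −f_x·N and ½(N_x − N·N_y) = −f_x, ½(N_y + N·N_x) = −f_y on U (f has constant mean curvature H = 1 with Gauss map N). Let φ : ℝ × U → ℍ be smooth such that for every t ∈ ℝ, with T_t := ½(N·(cos t − 1) + sin t), the map φ(t, ·) satisfies ∂xφ(t,·) = ½(N_x − N·N_y)·T_t·φ(t,·) and ∂yφ(t,·) = ½(N_y + N·N_x)·T_t·φ(t,·) on U, and suppose φ(0, z₀) = v ≠ 0 for some z₀ ∈ U. Then φ(0, ·) is constant equal to v on U, and the map z ↦ f(z) + 2·(∂φ/∂t)(0, z)·v⁻¹ is constant on U. (Chart version of the Sym–Bobenko formula, Theorem 4.1: f = −2(∂/∂t φ_{e^{it}})|_{t=0}·φ_{λ=1}⁻¹ up to translation.) -/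

import Mathlib

/- Chart version of the Sym–Bobenko formula, Theorem 4.1: for a constant mean
curvature surface f with Gauss map N and a smooth S¹-family of d_λ-parallel
sections φ(t,·) (λ = e^{it}), the section φ(0,·) is constant and
f = −2(∂/∂t φ)|_{t=0}·φ_{λ=1}⁻¹ up to translation, i.e.
z ↦ f(z) + 2·(∂φ/∂t)(0,z)·v⁻¹ is constant. -/

noncomputable section
open Complex

local notation "ℍ" => Quaternion ℝ

/-- Partial derivative in the direction 1 (the x-direction). -/
def dx (f : ℂ → ℍ) (z : ℂ) : ℍ := fderiv ℝ f z 1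

/-- Partial derivative in the direction i (the y-direction). -/
def dy (f : ℂ → ℍ) (z : ℂ) : ℍ := fderiv ℝ f z Complex.I

/-- T_t = ½(N·(cos t − 1) + sin t). -/
def Tt (N : ℂ → ℍ) (t : ℝ) (z : ℂ) : ℍ :=
  (N z * ((Real.cos t - 1 : ℝ) : ℍ) + ((Real.sin t : ℝ) : ℍ)) / 2

lemma qcoe_smul (r : ℝ) : ((r : ℝ) : ℍ) = r • (1 : ℍ) := by
  rw [← Quaternion.coe_mul_eq_smul, mul_one]

lemma clm_eq_zero (L : ℂ →L[ℝ] ℍ) (h1 : L 1 = 0) (hI : L Complex.I = 0) : L = 0 := by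
  refine ContinuousLinearMap.ext fun c => ?_
  have hc : c.re • (1 : ℂ) + c.im • Complex.I = c := by
    simp [Complex.real_smul, Complex.re_add_im]
  rw [← hc, map_add, map_smul, map_smul, h1, hI, smul_zero, smul_zero, add_zero,
    ContinuousLinearMap.zero_apply]

lemma const_on_of_hasFDerivAt_zero {U : Set ℂ} (hU : IsOpen U) (hconn : IsPreconnected U)
    {g : ℂ → ℍ} (hg : ∀ z ∈ U, HasFDerivAt g (0 : ℂ →L[ℝ] ℍ) z) :
    ∀ z ∈ U, ∀ w ∈ U, g z = g w := by
  haveI : PreconnectedSpace U := Subtype.preconnectedSpace hconn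
  have hloc : IsLocallyConstant (fun x : U => g x.1) := by
    rw [IsLocallyConstant.iff_exists_open]
    rintro ⟨x, hx⟩
    obtain ⟨ε, hε, hball⟩ := Metric.isOpen_iff.1 hU x hx
    refine ⟨((↑) : U → ℂ) ⁻¹' Metric.ball x ε,
      (show IsOpen (Metric.ball x ε) from Metric.isOpen_ball).preimage continuous_subtype_val,
      Set.mem_preimage.2 (Metric.mem_ball_self hε), ?_⟩
    rintro ⟨y, hy⟩ hy'
    have hdiff : DifferentiableOn ℝ g (Metric.ball x ε) := fun w hw =>
      (hg w (hball hw)).differentiableAt.differentiableWithinAt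
    have h0 : ∀ w ∈ Metric.ball x ε, fderivWithin ℝ g (Metric.ball x ε) w = 0 := fun w hw => by
      rw [fderivWithin_of_isOpen Metric.isOpen_ball hw]
      exact (hg w (hball hw)).fderiv
    exact (convex_ball x ε).is_const_of_fderivWithin_eq_zero hdiff h0
      (by simpa using hy') (Metric.mem_ball_self hε)
  intro z hz w hw
  exact hloc.apply_eq_of_preconnectedSpace ⟨z, hz⟩ ⟨w, hw⟩

lemma qtwo_ne_zero : (2 : ℍ) ≠ 0 := by
  have : ((2:ℝ) : ℍ) ≠ 0 := by
    rw [ne_eq, ← Quaternion.coe_zero, Quaternion.coe_inj]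
    norm_num
  exact_mod_cast this

lemma key_arith (x v : ℍ) (hv : v ≠ 0) :
    (2:ℍ) * (x * ((1:ℍ)/2 * v)) * v⁻¹ = x := by
  have hc2 : Commute (2:ℍ) x := by
    show (2:ℍ) * x = x * 2
    rw [two_mul, mul_two]
  have hcinv : (2:ℍ)⁻¹ * x = x * (2:ℍ)⁻¹ := hc2.inv_left₀.eq
  rw [one_div, ← mul_assoc x, ← hcinv, mul_assoc ((2:ℍ)⁻¹), ← mul_assoc (2:ℍ),
    mul_inv_cancel₀ qtwo_ne_zero, one_mul, mul_assoc, mul_inv_cancel₀ hv, mul_one]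

set_option maxHeartbeats 1000000 in
theorem stmt_19 (U : Set ℂ) (hU : IsOpen U) (hconn : IsConnected U)
    (f N : ℂ → ℍ)
    (hfsmooth : ContDiffOn ℝ (⊤ : ℕ∞) f U)
    (hNsmooth : ContDiffOn ℝ (⊤ : ℕ∞) N U)
    (hfre : ∀ z ∈ U, (f z).re = 0)
    (hre : ∀ z ∈ U, (N z).re = 0)
    (hsq : ∀ z ∈ U, N z * N z = -1)
    (hconf1 : ∀ z ∈ U, dy f z = N z * dx f z)
    (hconf2 : ∀ z ∈ U, N z * dx f z = -(dx f z * N z))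
    (hcmc1 : ∀ z ∈ U, (dx N z - N z * dy N z) / 2 = -dx f z)
    (hcmc2 : ∀ z ∈ U, (dy N z + N z * dx N z) / 2 = -dy f z)
    (φ : ℝ × ℂ → ℍ)
    (hφsmooth : ContDiffOn ℝ (⊤ : ℕ∞) φ ((Set.univ : Set ℝ) ×ˢ U))
    (hparx : ∀ t : ℝ, ∀ z ∈ U,
      fderiv ℝ (fun w => φ (t, w)) z 1
        = ((dx N z - N z * dy N z) / 2) * Tt N t z * φ (t, z))
    (hpary : ∀ t : ℝ, ∀ z ∈ U,
      fderiv ℝ (fun w => φ (t, w)) z Complex.I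
        = ((dy N z + N z * dx N z) / 2) * Tt N t z * φ (t, z))
    (z₀ : ℂ) (hz₀ : z₀ ∈ U) (v : ℍ) (hv : v ≠ 0) (hφv : φ (0, z₀) = v) :
    (∀ z ∈ U, φ (0, z) = v)
    ∧ (∀ z ∈ U, ∀ w ∈ U,
        f z + 2 * deriv (fun t => φ (t, z)) 0 * v⁻¹
          = f w + 2 * deriv (fun t => φ (t, w)) 0 * v⁻¹) := by
  have hV : IsOpen ((Set.univ : Set ℝ) ×ˢ U) := isOpen_univ.prod hU
  have hφat : ∀ (t : ℝ), ∀ z ∈ U, ContDiffAt ℝ ((⊤ : ℕ∞) : WithTop ℕ∞) φ (t, z) :=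
    fun t z hz => hφsmooth.contDiffAt (hV.mem_nhds ⟨trivial, hz⟩)
  set G : ℝ × ℂ → (ℝ × ℂ) →L[ℝ] ℍ := fderiv ℝ φ with hGdef
  set P : ℂ →L[ℝ] ℝ × ℂ := (0 : ℂ →L[ℝ] ℝ).prod (ContinuousLinearMap.id ℝ ℂ) with hPdef
  set Q : ℝ →L[ℝ] ℝ × ℂ := (ContinuousLinearMap.id ℝ ℝ).prod (0 : ℝ →L[ℝ] ℂ) with hQdef
  have hone : ((⊤ : ℕ∞) : WithTop ℕ∞) ≠ 0 := by simp
  -- fderiv of the space-slices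
  have h1 : ∀ (t : ℝ), ∀ z ∈ U,
      HasFDerivAt (fun w => φ (t, w)) ((G (t, z)).comp P) z := by
    intro t z hz
    have hφd : HasFDerivAt φ (G (t, z)) (t, z) :=
      ((hφat t z hz).differentiableAt hone).hasFDerivAt
    have hin : HasFDerivAt (fun w : ℂ => ((t : ℝ), w)) P z :=
      (hasFDerivAt_const t z).prodMk (hasFDerivAt_id z)
    exact hφd.comp z hin
  -- fderiv of the time-slices
  have h2 : ∀ (t : ℝ), ∀ z ∈ U,
      HasFDerivAt (fun s => φ (s, z)) ((G (t, z)).comp Q) t := by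
    intro t z hz
    have hφd : HasFDerivAt φ (G (t, z)) (t, z) :=
      ((hφat t z hz).differentiableAt hone).hasFDerivAt
    have hin : HasFDerivAt (fun s : ℝ => (s, z)) Q t :=
      (hasFDerivAt_id t).prodMk (hasFDerivAt_const z t)
    exact hφd.comp t hin
  have hTt0 : ∀ z : ℂ, Tt N 0 z = 0 := by
    intro z
    simp [Tt]
  -- Part 1
  have hd0 : ∀ z ∈ U, HasFDerivAt (fun w => φ (0, w)) (0 : ℂ →L[ℝ] ℍ) z := by
    intro z hz
    have h := h1 0 z hz
    have e1 : ((G (0, z)).comp P) 1 = 0 := by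
      rw [← h.fderiv, hparx 0 z hz, hTt0]
      simp
    have eI : ((G (0, z)).comp P) Complex.I = 0 := by
      rw [← h.fderiv, hpary 0 z hz, hTt0]
      simp
    have hL : (G (0, z)).comp P = 0 := clm_eq_zero _ e1 eI
    exact hL ▸ h
  have part1 : ∀ z ∈ U, φ (0, z) = v := by
    intro z hz
    have := const_on_of_hasFDerivAt_zero hU hconn.isPreconnected hd0 z hz z₀ hz₀
    simpa [hφv] using this
  refine ⟨part1, ?_⟩
  -- Part 2
  have hφtd : ∀ z ∈ U, HasDerivAt (fun t => φ (t, z)) (G (0, z) (1, 0)) 0 := by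
    intro z hz
    have := (h2 0 z hz).hasDerivAt
    simpa [hQdef] using this
  have hψ : ∀ z ∈ U, deriv (fun t => φ (t, z)) 0 = G (0, z) (1, 0) :=
    fun z hz => (hφtd z hz).deriv
  -- derivative of Tt in t at 0
  have hTd : ∀ z : ℂ, HasDerivAt (fun t => Tt N t z) ((1 : ℍ)/2) 0 := by
    intro z
    have hfun : (fun t => Tt N t z)
        = fun t => (N z * ((Real.cos t - 1) • (1 : ℍ)) + (Real.sin t) • (1 : ℍ)) * (2 : ℍ)⁻¹ := by
      funext t
      rw [Tt, qcoe_smul, qcoe_smul, div_eq_mul_inv]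
    rw [hfun]
    have hcos : HasDerivAt (fun t : ℝ => (Real.cos t - 1) • (1 : ℍ)) ((-Real.sin 0) • (1 : ℍ)) 0 :=
      ((Real.hasDerivAt_cos 0).sub_const 1).smul_const (1 : ℍ)
    have hsin : HasDerivAt (fun t : ℝ => (Real.sin t) • (1 : ℍ)) ((Real.cos 0) • (1 : ℍ)) 0 :=
      (Real.hasDerivAt_sin 0).smul_const (1 : ℍ)
    have := ((hcos.const_mul (N z)).add hsin).mul_const ((2 : ℍ)⁻¹)
    convert this using 1 <;> try rfl
    simp [one_div]
  -- the constant section candidate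
  have hg : ∀ z ∈ U, HasFDerivAt (fun w => f w + 2 * (G (0, w) (1, 0)) * v⁻¹)
      (0 : ℂ →L[ℝ] ℍ) z := by
    intro z hz
    -- second derivative at (0, z)
    have hGd : DifferentiableAt ℝ G (0, z) := by
      have h := (hφat 0 z hz).fderiv_right (m := 1) (by norm_cast)
      exact h.differentiableAt one_ne_zero
    have hH : HasFDerivAt G (fderiv ℝ G (0, z)) (0, z) := hGd.hasFDerivAt
    set H : (ℝ × ℂ) →L[ℝ] (ℝ × ℂ) →L[ℝ] ℍ := fderiv ℝ G (0, z) with hHdef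
    have hev : ∀ᶠ y in nhds ((0 : ℝ), z), HasFDerivAt φ (G y) y := by
      filter_upwards [hV.mem_nhds ⟨trivial, hz⟩] with y hy
      exact ((hφsmooth.contDiffAt (hV.mem_nhds hy)).differentiableAt hone).hasFDerivAt
    have hsymm : ∀ a b : ℝ × ℂ, H a b = H b a :=
      second_derivative_symmetric_of_eventually hev hH
    -- mixed partial in direction 1
    have hκ1 : HasDerivAt (fun t => G (t, z) ((0 : ℝ), (1 : ℂ))) (H (1, 0) (0, 1)) 0 := by
      have hin : HasFDerivAt (fun s : ℝ => (s, z)) Q 0 :=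
        (hasFDerivAt_id 0).prodMk (hasFDerivAt_const z 0)
      have hcomp : HasFDerivAt (fun t : ℝ => G (t, z)) (H.comp Q) 0 := HasFDerivAt.comp (g := G) 0 hH hin
      have := ((ContinuousLinearMap.apply ℝ ℍ ((0 : ℝ), (1 : ℂ))).hasFDerivAt.comp 0
        hcomp).hasDerivAt
      simp [hQdef] at this; exact this
    have hκI : HasDerivAt (fun t => G (t, z) ((0 : ℝ), Complex.I)) (H (1, 0) (0, Complex.I)) 0 := by
      have hin : HasFDerivAt (fun s : ℝ => (s, z)) Q 0 :=
        (hasFDerivAt_id 0).prodMk (hasFDerivAt_const z 0)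
      have hcomp : HasFDerivAt (fun t : ℝ => G (t, z)) (H.comp Q) 0 := HasFDerivAt.comp (g := G) 0 hH hin
      have := ((ContinuousLinearMap.apply ℝ ℍ ((0 : ℝ), Complex.I)).hasFDerivAt.comp 0
        hcomp).hasDerivAt
      simp [hQdef] at this; exact this
    -- identify those t-curves using the parallel equations
    have hfun1 : (fun t => G (t, z) ((0 : ℝ), (1 : ℂ)))
        = fun t => ((dx N z - N z * dy N z) / 2) * Tt N t z * φ (t, z) := by
      funext t
      have h := (h1 t z hz).fderiv
      have h' := hparx t z hz
      rw [h] at h'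
      simpa [hPdef] using h'
    have hfunI : (fun t => G (t, z) ((0 : ℝ), Complex.I))
        = fun t => ((dy N z + N z * dx N z) / 2) * Tt N t z * φ (t, z) := by
      funext t
      have h := (h1 t z hz).fderiv
      have h' := hpary t z hz
      rw [h] at h'
      simpa [hPdef] using h'
    -- compute derivative of the right-hand side
    have hrhs1 : HasDerivAt (fun t => ((dx N z - N z * dy N z) / 2) * Tt N t z * φ (t, z))
        (((dx N z - N z * dy N z) / 2) * ((1 : ℍ)/2 * v)) 0 := by
      have := (((hTd z).mul (hφtd z hz)).const_mul ((dx N z - N z * dy N z) / 2))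
      have heq : ((dx N z - N z * dy N z) / 2) * ((1 : ℍ)/2 * φ (0, z) + Tt N 0 z * G (0, z) (1, 0))
          = ((dx N z - N z * dy N z) / 2) * ((1 : ℍ)/2 * v) := by
        rw [part1 z hz, hTt0]
        simp
      rw [← heq]
      convert this using 1 <;> try rfl
      funext t
      rw [mul_assoc]; rfl
    have hrhsI : HasDerivAt (fun t => ((dy N z + N z * dx N z) / 2) * Tt N t z * φ (t, z))
        (((dy N z + N z * dx N z) / 2) * ((1 : ℍ)/2 * v)) 0 := by
      have := (((hTd z).mul (hφtd z hz)).const_mul ((dy N z + N z * dx N z) / 2))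
      have heq : ((dy N z + N z * dx N z) / 2) * ((1 : ℍ)/2 * φ (0, z) + Tt N 0 z * G (0, z) (1, 0))
          = ((dy N z + N z * dx N z) / 2) * ((1 : ℍ)/2 * v) := by
        rw [part1 z hz, hTt0]
        simp
      rw [← heq]
      convert this using 1 <;> try rfl
      funext t
      rw [mul_assoc]; rfl
    have hmix1 : H (1, 0) (0, 1) = ((dx N z - N z * dy N z) / 2) * ((1 : ℍ)/2 * v) := by
      refine HasDerivAt.unique ?_ hrhs1
      rw [← hfun1]; exact hκ1
    have hmixI : H (1, 0) (0, Complex.I) = ((dy N z + N z * dx N z) / 2) * ((1 : ℍ)/2 * v) := by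
      refine HasDerivAt.unique ?_ hrhsI
      rw [← hfunI]; exact hκI
    -- derivative of w ↦ G (0, w) (1, 0)
    have hin0 : HasFDerivAt (fun w : ℂ => ((0 : ℝ), w)) P z :=
      (hasFDerivAt_const (0 : ℝ) z).prodMk (hasFDerivAt_id z)
    have hGat : HasFDerivAt (fun w => G (0, w)) (H.comp P) z := HasFDerivAt.comp (g := G) z hH hin0
    have hη : HasFDerivAt (fun w => G (0, w) ((1 : ℝ), (0 : ℂ)))
        ((ContinuousLinearMap.apply ℝ ℍ ((1 : ℝ), (0 : ℂ))).comp (H.comp P)) z :=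
      (ContinuousLinearMap.apply ℝ ℍ ((1 : ℝ), (0 : ℂ))).hasFDerivAt.comp z hGat
    -- derivative of f
    have hfd : HasFDerivAt f (fderiv ℝ f z) z :=
      (((hfsmooth.contDiffAt (hU.mem_nhds hz))).differentiableAt hone).hasFDerivAt
    have htot := hfd.add ((hη.const_mul (2 : ℍ)).mul_const' (v⁻¹))
    have hM : (fderiv ℝ f z + (((2 : ℍ) • ((ContinuousLinearMap.apply ℝ ℍ ((1 : ℝ), (0 : ℂ))).comp
        (H.comp P))).smulRight v⁻¹)) = 0 := by
      apply clm_eq_zero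
      · rw [ContinuousLinearMap.add_apply, ContinuousLinearMap.smulRight_apply,
          ContinuousLinearMap.smul_apply, ContinuousLinearMap.comp_apply,
          ContinuousLinearMap.comp_apply]
        simp only [hPdef, ContinuousLinearMap.prod_apply, ContinuousLinearMap.zero_apply,
          ContinuousLinearMap.id_apply, ContinuousLinearMap.apply_apply, smul_eq_mul]
        rw [hsymm ((0 : ℝ), (1 : ℂ)) ((1 : ℝ), (0 : ℂ)), hmix1,
          key_arith _ v hv, hcmc1 z hz]
        show dx f z + -dx f z = 0
        rw [add_neg_cancel]
      · rw [ContinuousLinearMap.add_apply, ContinuousLinearMap.smulRight_apply,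
          ContinuousLinearMap.smul_apply, ContinuousLinearMap.comp_apply,
          ContinuousLinearMap.comp_apply]
        simp only [hPdef, ContinuousLinearMap.prod_apply, ContinuousLinearMap.zero_apply,
          ContinuousLinearMap.id_apply, ContinuousLinearMap.apply_apply, smul_eq_mul]
        rw [hsymm ((0 : ℝ), Complex.I) ((1 : ℝ), (0 : ℂ)), hmixI,
          key_arith _ v hv, hcmc2 z hz]
        show dy f z + -dy f z = 0
        rw [add_neg_cancel]
    rw [← hM]
    convert htot using 1 <;> try rfl
  have hgconst := const_on_of_hasFDerivAt_zero hU hconn.isPreconnected hg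
  intro z hz w hw
  have := hgconst z hz w hw
  rw [hψ z hz, hψ w hw]
  simpa using this
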